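/- Let 0 < q ≤ 2 and let x, y be real numbers with y ≠ 0. Then |x|^q ≤ (q/2)·|y|^(q−2)·x² + ((2−q)/2)·|y|^q. -/
import Mathlib


/-- Lemma 1: pointwise majorization inequality for `|x|^q`. -/
theorem lq_majorization (q x y : ℝ) (hq0 : 0 < q) (hq2 : q ≤ 2) (hy : y ≠ 0) :
    |x| ^ q ≤ q / 2 * |y| ^ (q - 2) * x ^ 2 + (2 - q) / 2 * |y| ^ q := by
  have hy' : (0:ℝ) < |y| := abs_pos.mpr hy
  have hx : (0:ℝ) ≤ |x| := abs_nonneg x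
  have hp1 : (0:ℝ) ≤ |y| ^ (q - 2) * x ^ 2 :=
    mul_nonneg (Real.rpow_nonneg hy'.le _) (sq_nonneg x)
  have key := Real.geom_mean_le_arith_mean2_weighted
    (by linarith : (0:ℝ) ≤ q / 2) (by linarith : (0:ℝ) ≤ (2 - q) / 2)
    hp1 (Real.rpow_nonneg hy'.le q) (by ring)
  have hgeom : (|y| ^ (q - 2) * x ^ 2) ^ (q / 2) * (|y| ^ q) ^ ((2 - q) / 2)
      = |x| ^ q := by
    have hx2 : x ^ 2 = |x| ^ ((2:ℝ)) := by
      rw [Real.rpow_two, sq_abs]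
    have hzero : |y| ^ ((q-2)*(q/2)) * |y| ^ (q*((2-q)/2)) = 1 := by
      rw [← Real.rpow_add hy', show (q-2)*(q/2) + q*((2-q)/2) = 0 by ring,
        Real.rpow_zero]
    rw [hx2, Real.mul_rpow (Real.rpow_nonneg hy'.le _) (Real.rpow_nonneg hx _),
      ← Real.rpow_mul hy'.le, ← Real.rpow_mul hx, ← Real.rpow_mul hy'.le,
      show (2:ℝ)*(q/2) = q by ring, mul_right_comm, hzero, one_mul]
  calc |x| ^ q = (|y| ^ (q - 2) * x ^ 2) ^ (q / 2) * (|y| ^ q) ^ ((2 - q) / 2) := hgeom.symm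
    _ ≤ q / 2 * (|y| ^ (q - 2) * x ^ 2) + (2 - q) / 2 * |y| ^ q := key
    _ = q / 2 * |y| ^ (q - 2) * x ^ 2 + (2 - q) / 2 * |y| ^ q := by ring
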